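/- Let L be a p×k matrix, δ ∈ ℝ^p nonzero, ρ > 0, σ ∈ ℝ, and set Σ_tot = L Lᵀ + σ² I + ρ δ δᵀ. Suppose the angle φ between δ and the column space of L satisfies sin²(φ) ≥ C_φ > 0, and that rank(L) = k so the span W₁ of the columns of L together with δ has dimension k+1. Let Δ_k² = λ_min(Lᵀ L) (the smallest of λᵢ(Σ) − σ², i ≤ k) and m² = ρ‖δ‖². Then for every unit vector v ∈ W₁, vᵀ (L Lᵀ + ρ δ δᵀ) v ≥ (C_φ/2)·min(Δ_k², m²). -/

import Mathlib

open Matrix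

private lemma geo_aux (a g s c d q : ℝ) (ha : 0 ≤ a) (hg : 0 ≤ g) (hs : 0 ≤ s) (hc : 0 ≤ c)
    (hd : 0 ≤ d) (h1 : a^2 + g^2 = 1) (h2 : c^2 + s^2 = d^2)
    (hq : g*s - c*a ≤ |q|) : s ≤ a*d + |q| := by
  rcases le_or_gt s (a*d) with h | h
  · have := abs_nonneg q; linarith
  rcases eq_or_lt_of_le hd with rfl0 | hdpos
  · have hs0 : s = 0 := by nlinarith
    have := abs_nonneg q
    nlinarith
  have hdc : 0 < d + c := by linarith
  have h1g : 0 < 1 + g := by linarith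
  have had2 : (a*d)^2 ≤ s^2 := by nlinarith [mul_nonneg ha hd]
  have hacsq : (a*c)^2 ≤ (s*g)^2 := by
    have hdiff : (s*g)^2 - (a*c)^2 = s^2 - (a*d)^2 := by
      linear_combination (s^2)*h1 - (a^2)*h2
    linarith
  have hac : a*c ≤ s*g := by
    have h' := Real.sqrt_le_sqrt hacsq
    rwa [Real.sqrt_sq (by positivity), Real.sqrt_sq (by positivity)] at h'
  have hkey : a*(d+c) ≤ s*(1+g) := by nlinarith [mul_nonneg ha hd]
  have h5 : s*a*(a*(d+c)) ≤ s*a*(s*(1+g)) :=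
    mul_le_mul_of_nonneg_left hkey (mul_nonneg hs ha)
  have hiden : (a*(d-c) - s*(1-g)) * ((d+c)*(1+g))
      = s*a*(s*(1+g)) - s*a*(a*(d+c)) := by
    linear_combination (-(a*(1+g)))*h2 + (s*(d+c))*h1
  have hfin : 0 ≤ a*(d-c) - s*(1-g) := by
    have hnum : 0 ≤ (a*(d-c) - s*(1-g)) * ((d+c)*(1+g)) := by rw [hiden]; linarith
    exact (mul_nonneg_iff_of_pos_right (mul_pos hdc h1g)).mp hnum
  linarith

private lemma exists_proj {n : ℕ} (s : Set (Fin n → ℝ)) (δ : Fin n → ℝ) :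
    ∃ pδ ∈ Submodule.span ℝ s, ∀ w ∈ Submodule.span ℝ s, w ⬝ᵥ (δ - pδ) = 0 := by
  classical
  set e : (Fin n → ℝ) ≃ₗ[ℝ] EuclideanSpace ℝ (Fin n) :=
    (WithLp.linearEquiv 2 ℝ (Fin n → ℝ)).symm with he
  set K : Submodule ℝ (EuclideanSpace ℝ (Fin n)) := (Submodule.span ℝ s).map (e : (Fin n → ℝ) →ₗ[ℝ] EuclideanSpace ℝ (Fin n)) with hK
  obtain ⟨y, hy, z, hz, hsum⟩ := K.exists_add_mem_mem_orthogonal (e δ)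
  obtain ⟨pδ, hpδ, rfl⟩ := hy
  refine ⟨pδ, hpδ, fun w hw => ?_⟩
  have hz' : inner ℝ (e w) z = (0 : ℝ) :=
    (Submodule.mem_orthogonal K z).mp hz (e w) ⟨w, hw, rfl⟩
  have hzeq : z = e (δ - pδ) := by
    rw [map_sub, hsum, LinearEquiv.coe_coe]; abel
  rw [hzeq] at hz'
  rw [← hz']
  simp [he, PiLp.inner_apply, dotProduct, RCLike.inner_apply, WithLp.linearEquiv,
    mul_comm]

private lemma dot_eq_inner {k : ℕ} (x y : EuclideanSpace ℝ (Fin k)) :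
    (x : Fin k → ℝ) ⬝ᵥ (y : Fin k → ℝ) = (inner ℝ x y : ℝ) := by
  simp [PiLp.inner_apply, RCLike.inner_apply, dotProduct, mul_comm]

private lemma spec_aux {p k : ℕ} (L : Matrix (Fin p) (Fin k) ℝ) (c : Fin k → ℝ) :
    (⨅ i, (show (Lᵀ * L).IsHermitian by
      simpa [Matrix.conjTranspose_eq_transpose_of_trivial] using
        Matrix.isHermitian_conjTranspose_mul_self L).eigenvalues i) * ((L *ᵥ c) ⬝ᵥ (L *ᵥ c))
      ≤ (Lᵀ *ᵥ (L *ᵥ c)) ⬝ᵥ (Lᵀ *ᵥ (L *ᵥ c)) := by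
  classical
  rcases Nat.eq_zero_or_pos k with hk | hk
  · subst hk
    have h0 : L *ᵥ c = 0 := by ext i; simp [Matrix.mulVec, dotProduct]
    simp [h0]
  have : Nonempty (Fin k) := Fin.pos_iff_nonempty.mp hk
  set hA := (show (Lᵀ * L).IsHermitian by
      simpa [Matrix.conjTranspose_eq_transpose_of_trivial] using
        Matrix.isHermitian_conjTranspose_mul_self L) with hhA
  set A := Lᵀ * L with hAdef
  set μ := hA.eigenvalues with hμ
  set b := hA.eigenvectorBasis with hb
  set x : EuclideanSpace ℝ (Fin k) := WithLp.toLp 2 c with hx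
  set y : EuclideanSpace ℝ (Fin k) := WithLp.toLp 2 (A *ᵥ c) with hy
  have hrepr : ∀ i, b.repr y i = μ i * b.repr x i := by
    intro i
    rw [b.repr_apply_apply, b.repr_apply_apply]
    rw [← dot_eq_inner, ← dot_eq_inner]
    have hsym : Aᵀ = A := hA
    calc (b i : Fin k → ℝ) ⬝ᵥ (y : Fin k → ℝ)
        = (Aᵀ *ᵥ (b i : Fin k → ℝ)) ⬝ᵥ c := by
          rw [hy]; rw [Matrix.dotProduct_mulVec, Matrix.mulVec_transpose]
      _ = (A *ᵥ (b i : Fin k → ℝ)) ⬝ᵥ c := by rw [hsym]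
      _ = (μ i • (b i : Fin k → ℝ)) ⬝ᵥ c := by
            rw [show A *ᵥ (b i : Fin k → ℝ) = μ i • (b i : Fin k → ℝ) from
              hA.mulVec_eigenvectorBasis i]
      _ = μ i * ((b i : Fin k → ℝ) ⬝ᵥ c) := by rw [smul_dotProduct]; rfl
  have hxy : (x : Fin k → ℝ) ⬝ᵥ (y : Fin k → ℝ) = ∑ i, μ i * (b.repr x i)^2 := by
    rw [dot_eq_inner, ← b.repr.inner_map_map x y]
    simp only [PiLp.inner_apply, RCLike.inner_apply, starRingEnd_apply, star_trivial]
    exact Finset.sum_congr rfl fun i _ => by rw [hrepr i]; ring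
  have hyy : (y : Fin k → ℝ) ⬝ᵥ (y : Fin k → ℝ) = ∑ i, (μ i * b.repr x i)^2 := by
    rw [dot_eq_inner, ← b.repr.inner_map_map y y]
    simp only [PiLp.inner_apply, RCLike.inner_apply, starRingEnd_apply, star_trivial]
    exact Finset.sum_congr rfl fun i _ => by rw [hrepr i]; ring
  have hLc : (L *ᵥ c) ⬝ᵥ (L *ᵥ c) = (x : Fin k → ℝ) ⬝ᵥ (y : Fin k → ℝ) := by
    rw [hx, hy, hAdef, ← Matrix.mulVec_mulVec]
    rw [Matrix.dotProduct_mulVec, Matrix.mulVec_transpose, dotProduct_comm]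
  have hAc : (Lᵀ *ᵥ (L *ᵥ c)) ⬝ᵥ (Lᵀ *ᵥ (L *ᵥ c)) = (y : Fin k → ℝ) ⬝ᵥ (y : Fin k → ℝ) := by
    rw [hy, hAdef, ← Matrix.mulVec_mulVec]
  rw [hLc, hAc, hxy, hyy, Finset.mul_sum]
  apply Finset.sum_le_sum
  intro i _
  have hnn : 0 ≤ μ i := (Matrix.posSemidef_conjTranspose_mul_self L).eigenvalues_nonneg i
  have hle : (⨅ j, μ j) ≤ μ i := ciInf_le (Finite.bddBelow_range _) i
  have h1 : 0 ≤ μ i * (b.repr x i)^2 := mul_nonneg hnn (sq_nonneg _)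
  calc (⨅ j, μ j) * (μ i * (b.repr x i)^2) ≤ μ i * (μ i * (b.repr x i)^2) :=
        mul_le_mul_of_nonneg_right hle h1
    _ = (μ i * b.repr x i)^2 := by ring

set_option maxHeartbeats 1000000 in
/-- Key inequality in Lemma S.5: for every unit vector `v` in the subspace `W₁`
spanned by the columns of `L` together with `δ`, one has
`vᵀ (L Lᵀ + ρ δ δᵀ) v ≥ (C_φ/2) min(Δ_k², m²)`, where `Δ_k²` is the smallest
eigenvalue of `LᵀL`, `m² = ρ‖δ‖²`, and `sin²φ ≥ C_φ` with `φ` the angle between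
`δ` and the column space of `L` (encoded as `‖δ − w‖² ≥ C_φ ‖δ‖²` for every `w`
in the column space). -/
theorem stmt_3 {p k : ℕ}
    (L : Matrix (Fin p) (Fin k) ℝ) (δ : Fin p → ℝ) (hδ : δ ≠ 0)
    (ρ Cφ : ℝ) (hρ : 0 < ρ) (hCφ : 0 < Cφ)
    (hrank : L.rank = k)
    (hdim : Module.finrank ℝ
        (Submodule.span ℝ (insert δ (Set.range fun j : Fin k => fun i => L i j))
          : Submodule ℝ (Fin p → ℝ)) = k + 1)
    (hangle : ∀ w ∈ Submodule.span ℝ (Set.range fun j : Fin k => fun i => L i j),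
      Cφ * (δ ⬝ᵥ δ) ≤ (δ - w) ⬝ᵥ (δ - w))
    (Δsq : ℝ)
    (hΔsq : Δsq = ⨅ i, (show (Lᵀ * L).IsHermitian by
      simpa [Matrix.conjTranspose_eq_transpose_of_trivial] using
        Matrix.isHermitian_conjTranspose_mul_self L).eigenvalues i) :
    ∀ v : Fin p → ℝ,
      v ∈ Submodule.span ℝ (insert δ (Set.range fun j : Fin k => fun i => L i j)) →
      v ⬝ᵥ v = 1 →
      Cφ / 2 * min Δsq (ρ * (δ ⬝ᵥ δ)) ≤ v ⬝ᵥ ((L * Lᵀ + ρ • vecMulVec δ δ) *ᵥ v) := by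
  classical
  intro v hv hv1
  set S : Set (Fin p → ℝ) := Set.range (fun j : Fin k => fun i => L i j) with hSdef
  obtain ⟨pδ, hpδ, horth⟩ := exists_proj S δ
  set z : Fin p → ℝ := δ - pδ with hzdef
  rw [Submodule.mem_span_insert] at hv
  obtain ⟨t, u₀, hu₀, hveq⟩ := hv
  set u : Fin p → ℝ := u₀ + t • pδ with hudef
  have huS : u ∈ Submodule.span ℝ S := Submodule.add_mem _ hu₀ (Submodule.smul_mem _ t hpδ)
  have hvdec : v = u + t • z := by rw [hveq, hudef, hzdef]; module
  -- basic dot product facts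
  have dotnn : ∀ x : Fin p → ℝ, 0 ≤ x ⬝ᵥ x :=
    fun x => Finset.sum_nonneg fun i _ => mul_self_nonneg _
  set d2 := δ ⬝ᵥ δ with hd2def
  set S2 := z ⬝ᵥ z with hS2def
  set C2 := pδ ⬝ᵥ pδ with hC2def
  set A2 := u ⬝ᵥ u with hA2def
  set r := pδ ⬝ᵥ u with hrdef
  set q := δ ⬝ᵥ v with hqdef
  have hzu : u ⬝ᵥ z = 0 := horth u huS
  have hzp : pδ ⬝ᵥ z = 0 := horth pδ hpδ
  have hδeq : δ = pδ + z := by rw [hzdef]; abel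
  have hd2pos : 0 < d2 := by
    rcases eq_or_lt_of_le (dotnn δ) with h | h
    · exact absurd (dotProduct_self_eq_zero.mp h.symm) hδ
    · exact h
  have hD : C2 + S2 = d2 := by
    have e1 : δ ⬝ᵥ δ = C2 + (pδ ⬝ᵥ z) + (z ⬝ᵥ pδ) + S2 := by
      conv_lhs => rw [hδeq]
      simp only [dotProduct_add, add_dotProduct, hC2def, hS2def]
      ring
    rw [dotProduct_comm z pδ, hzp] at e1
    rw [hd2def]
    linarith
  have hvv : A2 + t^2*S2 = 1 := by
    have e1 : v ⬝ᵥ v = A2 + t*(u ⬝ᵥ z) + t*(z ⬝ᵥ u) + t^2*S2 := by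
      rw [hvdec]
      simp only [dotProduct_add, add_dotProduct, dotProduct_smul,
        smul_dotProduct, smul_eq_mul, hA2def, hS2def]
      ring
    rw [dotProduct_comm z u, hzu] at e1
    rw [hv1] at e1
    linarith
  have hqeq : q = r + t * S2 := by
    have e1 : δ ⬝ᵥ v = r + t*(pδ ⬝ᵥ z) + (z ⬝ᵥ u) + t^2*0 + t*S2 := by
      conv_lhs => rw [hvdec, hδeq]
      simp only [dotProduct_add, add_dotProduct, dotProduct_smul,
        smul_dotProduct, smul_eq_mul, hrdef, hS2def]
      ring
    rw [dotProduct_comm z u, hzu, hzp] at e1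
    rw [hqdef]
    linarith
  have hangle' : Cφ * d2 ≤ S2 := hangle pδ hpδ
  have hCS : r^2 ≤ C2 * A2 := by
    have h := Finset.sum_mul_sq_le_sq_mul_sq Finset.univ pδ u
    simpa [hrdef, hC2def, hA2def, dotProduct, sq] using h
  -- the spectral bound
  have hSrange : Submodule.span ℝ S = LinearMap.range L.mulVecLin := by
    rw [Matrix.range_mulVecLin]
    rfl
  obtain ⟨cv, hcv⟩ := hSrange ▸ huS
  have hcv' : L *ᵥ cv = u := hcv
  have hLz : Lᵀ *ᵥ z = 0 := by
    ext j
    have hcol : (fun i => L i j) ∈ Submodule.span ℝ S :=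
      Submodule.subset_span ⟨j, rfl⟩
    have := horth _ hcol
    simpa [Matrix.mulVec, dotProduct, Matrix.transpose] using this
  have hW : Lᵀ *ᵥ v = Lᵀ *ᵥ u := by
    rw [hvdec, Matrix.mulVec_add, Matrix.mulVec_smul, hLz, smul_zero, add_zero]
  set W := (Lᵀ *ᵥ v) ⬝ᵥ (Lᵀ *ᵥ v) with hWdef
  have hspec : Δsq * A2 ≤ W := by
    rw [hWdef, hW, hA2def, ← hcv', hΔsq]
    exact spec_aux L cv
  -- rewrite goal quadratic form
  have hvmv : vecMulVec δ δ *ᵥ v = q • δ := by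
    ext i
    simp only [Matrix.mulVec, Matrix.vecMulVec_apply, dotProduct, Pi.smul_apply,
      smul_eq_mul, hqdef]
    rw [Finset.sum_mul]
    exact Finset.sum_congr rfl fun j _ => by ring
  have hgoal : v ⬝ᵥ ((L * Lᵀ + ρ • vecMulVec δ δ) *ᵥ v) = W + ρ * q^2 := by
    rw [Matrix.add_mulVec, dotProduct_add]
    congr 1
    · rw [← Matrix.mulVec_mulVec, Matrix.dotProduct_mulVec, ← Matrix.mulVec_transpose,
        hWdef]
    · rw [Matrix.smul_mulVec, dotProduct_smul, hvmv, dotProduct_smul,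
        dotProduct_comm v δ, ← hqdef]
      simp only [smul_eq_mul]
      ring
  rw [hgoal]
  -- square roots
  set a := Real.sqrt A2 with hadef
  set s := Real.sqrt S2 with hsdef
  set c := Real.sqrt C2 with hcdef
  set d := Real.sqrt d2 with hddef
  set g := |t| * s with hgdef
  have hA2nn : 0 ≤ A2 := dotnn u
  have hS2nn : 0 ≤ S2 := dotnn z
  have hC2nn : 0 ≤ C2 := dotnn pδ
  have ha2 : a^2 = A2 := Real.sq_sqrt hA2nn
  have hs2 : s^2 = S2 := Real.sq_sqrt hS2nn
  have hc2 : c^2 = C2 := Real.sq_sqrt hC2nn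
  have hd2 : d^2 = d2 := Real.sq_sqrt hd2pos.le
  have hanng : 0 ≤ a := Real.sqrt_nonneg _
  have hsnng : 0 ≤ s := Real.sqrt_nonneg _
  have hcnng : 0 ≤ c := Real.sqrt_nonneg _
  have hdnng : 0 ≤ d := Real.sqrt_nonneg _
  have hgnng : 0 ≤ g := mul_nonneg (abs_nonneg _) hsnng
  have h1 : a^2 + g^2 = 1 := by
    rw [ha2, hgdef]
    have : (|t| * s)^2 = t^2 * S2 := by rw [mul_pow, sq_abs, hs2]
    rw [this]; exact hvv
  have h2 : c^2 + s^2 = d^2 := by rw [hc2, hs2, hd2]; exact hD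
  have hrabs : |r| ≤ c * a := by
    have hr2 : r^2 ≤ (c*a)^2 := by rw [mul_pow, hc2, ha2]; exact hCS
    have h' := Real.sqrt_le_sqrt hr2
    rwa [Real.sqrt_sq_eq_abs, Real.sqrt_sq (by positivity)] at h'
  have htS : |t * S2| = g * s := by
    rw [abs_mul, abs_of_nonneg hS2nn, hgdef, ← hs2]
    ring
  have hqlow : g*s - c*a ≤ |q| := by
    have habs : |t * S2| ≤ |q| + |r| := by
      have : t * S2 = q - r := by linarith [hqeq]
      rw [this]
      exact abs_sub _ _
    rw [htS] at habs
    linarith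
  have hgeo := geo_aux a g s c d (q := q) hanng hgnng hsnng hcnng hdnng h1 h2 hqlow
  have hgeo2 : Cφ * d2 ≤ 2*(A2*d2 + q^2) := by
    have hCd : Cφ * d2 ≤ s^2 := by rw [hs2]; exact hangle'
    have hsq : s^2 ≤ (a*d + |q|)^2 := pow_le_pow_left₀ hsnng hgeo 2
    have hexp : (a*d + |q|)^2 ≤ 2*(a^2*d^2) + 2*|q|^2 := by
      linarith only [sq_nonneg (a*d - |q|)]
    have had : a^2*d^2 = A2*d2 := by rw [ha2, hd2]
    have hqq : |q|^2 = q^2 := sq_abs q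
    linarith only [hCd, hsq, hexp, had, hqq]
  -- min eigenvalue nonneg
  have hΔ0 : 0 ≤ Δsq := by
    rcases Nat.eq_zero_or_pos k with hk | hk
    · subst hk
      rw [hΔsq]
      simp [Real.iInf_of_isEmpty]
    · have : Nonempty (Fin k) := Fin.pos_iff_nonempty.mp hk
      rw [hΔsq]
      exact le_ciInf fun i =>
        (Matrix.posSemidef_conjTranspose_mul_self L).eigenvalues_nonneg i
  set M := min Δsq (ρ * d2) with hMdef
  have hM0 : 0 ≤ M := le_min hΔ0 (by positivity)
  have hMa : M ≤ Δsq := min_le_left _ _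
  have hMb : M ≤ ρ * d2 := min_le_right _ _
  have f1 : Cφ * d2 * M ≤ (2*(A2*d2 + q^2)) * M :=
    mul_le_mul_of_nonneg_right hgeo2 hM0
  have f2 : d2*(M*A2) ≤ d2*(Δsq*A2) :=
    mul_le_mul_of_nonneg_left (mul_le_mul_of_nonneg_right hMa hA2nn) hd2pos.le
  have f3 : M*q^2 ≤ (ρ*d2)*q^2 := mul_le_mul_of_nonneg_right hMb (sq_nonneg q)
  have f4 : d2*(Δsq*A2) ≤ d2*W := mul_le_mul_of_nonneg_left hspec hd2pos.le
  have hbig : (Cφ * M) * d2 ≤ (2*(W + ρ*q^2)) * d2 := by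
    linarith only [f1, f2, f3, f4]
  have h7 : Cφ * M ≤ 2*(W + ρ*q^2) := le_of_mul_le_mul_right hbig hd2pos
  linarith only [h7]
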